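/- Let F : 𝒞 ⥤ 𝒟 be a Frobenius functor with two-sided adjoint G : 𝒟 ⥤ 𝒞; let η : 𝟭 𝒞 ⟶ F ⋙ G and ε : G ⋙ F ⟶ 𝟭 𝒟 be the unit and counit of an adjunction F ⊣ G, and let χ : 𝟭 𝒟 ⟶ G ⋙ F and μ : F ⋙ G ⟶ 𝟭 𝒞 be the unit and counit of an adjunction G ⊣ F. Then the following are equivalent: (1) F is naturally full; (2) there exists a natural transformation α : G ⟶ G such that α_{F.obj C} ≫ μ_C ≫ η_C = 𝟙 (G.obj (F.obj C)) for all C; (3) there exists a natural transformation β : F ⟶ F such that G.map β_C ≫ μ_C ≫ η_C = 𝟙 (G.obj (F.obj C)) for all C; (4) there exists a natural transformation α' : G ⟶ G such that μ_C ≫ η_C ≫ α'_{F.obj C} = 𝟙 (G.obj (F.obj C)) for all C; (5) there exists a natural transformation β' : F ⟶ F such that μ_C ≫ η_C ≫ G.map β'_C = 𝟙 (G.obj (F.obj C)) for all C. Moreover, in this case μ_C ≫ η_C : G.obj (F.obj C) ⟶ G.obj (F.obj C) is an isomorphism for every object C of 𝒞. -/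

import Mathlib

open CategoryTheory

/-- A functor `F : C ⥤ D` is *naturally full* if there is a family of maps
`𝒫 : (F.obj X ⟶ F.obj Y) → (X ⟶ Y)`, natural in `X` and `Y`, which is a section of
the action of `F` on morphisms. -/
def NaturallyFull {C D : Type*} [Category C] [Category D] (F : C ⥤ D) : Prop :=
  ∃ P : ∀ (X Y : C), (F.obj X ⟶ F.obj Y) → (X ⟶ Y),
    (∀ (X' X Y Y' : C) (f : X' ⟶ X) (g : F.obj X ⟶ F.obj Y) (h : Y ⟶ Y'),
      P X' Y' (F.map f ≫ g ≫ F.map h) = f ≫ P X Y g ≫ h) ∧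
    (∀ (X Y : C) (g : F.obj X ⟶ F.obj Y), F.map (P X Y g) = g)

/-- First characterization: `F` is naturally full iff there is a natural transformation
`e : F ⋙ G ⟶ 𝟭 C` with `e ≫ η = 𝟙`. -/
lemma naturallyFull_iff_exists_e {C D : Type*} [Category C] [Category D]
    (F : C ⥤ D) (G : D ⥤ C) (adj₁ : F ⊣ G) :
    NaturallyFull F ↔ ∃ e : F ⋙ G ⟶ 𝟭 C, ∀ X : C,
      e.app X ≫ adj₁.unit.app X = 𝟙 (G.obj (F.obj X)) := by
  constructor
  · rintro ⟨P, hnat, hsec⟩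
    refine ⟨⟨fun X => P _ _ (adj₁.counit.app (F.obj X)), ?_⟩, ?_⟩
    · intro X Y f
      have h1 := hnat _ _ _ _ (G.map (F.map f)) (adj₁.counit.app (F.obj Y)) (𝟙 Y)
      have h2 := hnat _ _ _ _ (𝟙 (G.obj (F.obj X))) (adj₁.counit.app (F.obj X)) f
      have h3 : F.map (G.map (F.map f)) ≫ adj₁.counit.app (F.obj Y) ≫ F.map (𝟙 Y)
          = F.map (𝟙 (G.obj (F.obj X))) ≫ adj₁.counit.app (F.obj X) ≫ F.map f := by
        simp [adj₁.counit_naturality]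
      rw [h3, h2] at h1
      simpa using h1.symm
    · intro X
      have hF : F.map (P _ _ (adj₁.counit.app (F.obj X))) = adj₁.counit.app (F.obj X) :=
        hsec _ _ _
      have hn := adj₁.unit.naturality (P _ _ (adj₁.counit.app (F.obj X)))
      simp only [Functor.id_map, Functor.comp_map, Functor.id_obj, Functor.comp_obj] at hn
      show P (G.obj (F.obj X)) X (adj₁.counit.app (F.obj X)) ≫ adj₁.unit.app X
          = 𝟙 (G.obj (F.obj X))
      rw [hn, hF, adj₁.right_triangle_components]
  · rintro ⟨e, he⟩
    have key : ∀ X : C, F.map (e.app X) = adj₁.counit.app (F.obj X) := by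
      intro X
      apply (adj₁.homEquiv _ _).injective
      simp only [Adjunction.homEquiv_unit]
      have hn := adj₁.unit.naturality (e.app X)
      simp only [Functor.id_map, Functor.comp_map, Functor.id_obj, Functor.comp_obj] at hn
      show adj₁.unit.app (G.obj (F.obj X)) ≫ G.map (F.map (e.app X))
          = adj₁.unit.app (G.obj (F.obj X)) ≫ G.map (adj₁.counit.app (F.obj X))
      rw [← hn, he X, adj₁.right_triangle_components]
    refine ⟨fun X Y g => adj₁.unit.app X ≫ G.map g ≫ e.app Y, ?_, ?_⟩
    · intro X' X Y Y' f g h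
      have h1 := adj₁.unit.naturality f
      simp only [Functor.id_map, Functor.comp_map] at h1
      have h2 := e.naturality h
      simp only [Functor.id_map, Functor.comp_map] at h2
      simp only [Functor.map_comp, Category.assoc]
      rw [h2, reassoc_of% h1]
    · intro X Y g
      simp only [Functor.map_comp, key Y]
      rw [adj₁.counit_naturality g, reassoc_of% adj₁.left_triangle_components X]

/-- Second characterization: `F` is naturally full iff there is a natural transformation
`m : 𝟭 C ⟶ F ⋙ G` with `μ ≫ m = 𝟙`. -/
lemma naturallyFull_iff_exists_m {C D : Type*} [Category C] [Category D]
    (F : C ⥤ D) (G : D ⥤ C) (adj₂ : G ⊣ F) :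
    NaturallyFull F ↔ ∃ m : 𝟭 C ⟶ F ⋙ G, ∀ X : C,
      adj₂.counit.app X ≫ m.app X = 𝟙 (G.obj (F.obj X)) := by
  constructor
  · rintro ⟨P, hnat, hsec⟩
    refine ⟨⟨fun X => P _ _ (adj₂.unit.app (F.obj X)), ?_⟩, ?_⟩
    · intro X Y f
      have h1 := hnat _ _ _ _ f (adj₂.unit.app (F.obj Y)) (𝟙 (G.obj (F.obj Y)))
      have h2 := hnat _ _ _ _ (𝟙 X) (adj₂.unit.app (F.obj X)) (G.map (F.map f))
      have h3 : F.map f ≫ adj₂.unit.app (F.obj Y) ≫ F.map (𝟙 (G.obj (F.obj Y)))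
          = F.map (𝟙 X) ≫ adj₂.unit.app (F.obj X) ≫ F.map (G.map (F.map f)) := by
        simp [adj₂.unit.naturality (F.map f)]
      rw [h3, h2] at h1
      simpa using h1.symm
    · intro X
      have hF : F.map (P _ _ (adj₂.unit.app (F.obj X))) = adj₂.unit.app (F.obj X) :=
        hsec _ _ _
      have hn := adj₂.counit.naturality (P _ _ (adj₂.unit.app (F.obj X)))
      simp only [Functor.id_map, Functor.comp_map, Functor.id_obj, Functor.comp_obj] at hn
      show adj₂.counit.app X ≫ P X (G.obj (F.obj X)) (adj₂.unit.app (F.obj X))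
          = 𝟙 (G.obj (F.obj X))
      rw [← hn, hF, adj₂.left_triangle_components]
  · rintro ⟨m, hm⟩
    have key : ∀ X : C, F.map (m.app X) = adj₂.unit.app (F.obj X) := by
      intro X
      apply (adj₂.homEquiv _ _).symm.injective
      simp only [Adjunction.homEquiv_counit]
      have hn := adj₂.counit.naturality (m.app X)
      simp only [Functor.id_map, Functor.comp_map, Functor.id_obj, Functor.comp_obj] at hn
      show G.map (F.map (m.app X)) ≫ adj₂.counit.app (G.obj (F.obj X))
          = G.map (adj₂.unit.app (F.obj X)) ≫ adj₂.counit.app (G.obj (F.obj X))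
      rw [hn, hm X]; simp
    refine ⟨fun X Y g => m.app X ≫ G.map g ≫ adj₂.counit.app Y, ?_, ?_⟩
    · intro X' X Y Y' f g h
      have h1 := m.naturality f
      simp only [Functor.id_map, Functor.comp_map] at h1
      have h2 := adj₂.counit.naturality h
      simp only [Functor.id_map, Functor.comp_map] at h2
      simp only [Functor.map_comp, Category.assoc]
      rw [h2, ← reassoc_of% h1]
    · intro X Y g
      simp only [Functor.map_comp, key X]
      have hn := adj₂.unit.naturality g
      simp only [Functor.id_map, Functor.comp_map] at hn
      rw [← reassoc_of% hn, adj₂.right_triangle_components, Category.comp_id]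

theorem frobenius_naturallyFull_tfae {C D : Type*} [Category C] [Category D]
    (F : C ⥤ D) (G : D ⥤ C) (adj₁ : F ⊣ G) (adj₂ : G ⊣ F) :
    (NaturallyFull F ↔ ∃ α : G ⟶ G, ∀ X : C,
        α.app (F.obj X) ≫ adj₂.counit.app X ≫ adj₁.unit.app X = 𝟙 (G.obj (F.obj X))) ∧
    (NaturallyFull F ↔ ∃ β : F ⟶ F, ∀ X : C,
        G.map (β.app X) ≫ adj₂.counit.app X ≫ adj₁.unit.app X = 𝟙 (G.obj (F.obj X))) ∧
    (NaturallyFull F ↔ ∃ α' : G ⟶ G, ∀ X : C,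
        adj₂.counit.app X ≫ adj₁.unit.app X ≫ α'.app (F.obj X) = 𝟙 (G.obj (F.obj X))) ∧
    (NaturallyFull F ↔ ∃ β' : F ⟶ F, ∀ X : C,
        adj₂.counit.app X ≫ adj₁.unit.app X ≫ G.map (β'.app X) = 𝟙 (G.obj (F.obj X))) ∧
    (NaturallyFull F → ∀ X : C, IsIso (adj₂.counit.app X ≫ adj₁.unit.app X)) := by
  have iff2 : NaturallyFull F ↔ ∃ α : G ⟶ G, ∀ X : C,
      α.app (F.obj X) ≫ adj₂.counit.app X ≫ adj₁.unit.app X = 𝟙 (G.obj (F.obj X)) := by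
    rw [naturallyFull_iff_exists_e F G adj₁]
    constructor
    · rintro ⟨e, he⟩
      refine ⟨⟨fun X => G.map (adj₂.unit.app X) ≫ e.app (G.obj X), ?_⟩, ?_⟩
      · intro X Y f
        have h1 := adj₂.unit.naturality f
        simp only [Functor.id_map, Functor.comp_map] at h1
        have h2 := e.naturality (G.map f)
        simp only [Functor.id_map, Functor.comp_map] at h2
        rw [← Category.assoc, ← G.map_comp, h1, G.map_comp, Category.assoc, h2, Category.assoc]
      · intro X
        dsimp only
        have h2 := e.naturality (adj₂.counit.app X)
        simp only [Functor.id_map, Functor.comp_map, Functor.id_obj, Functor.comp_obj] at h2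
        have h3 : G.map (adj₂.unit.app (F.obj X)) ≫ G.map (F.map (adj₂.counit.app X))
            = 𝟙 _ := by
          rw [← G.map_comp, adj₂.right_triangle_components]; simp
        rw [Category.assoc, ← reassoc_of% h2, reassoc_of% h3, he X]
    · rintro ⟨α, hα⟩
      exact ⟨Functor.whiskerLeft F α ≫ adj₂.counit, fun X => by simpa using hα X⟩
  have iff3 : NaturallyFull F ↔ ∃ β : F ⟶ F, ∀ X : C,
      G.map (β.app X) ≫ adj₂.counit.app X ≫ adj₁.unit.app X = 𝟙 (G.obj (F.obj X)) := by
    rw [naturallyFull_iff_exists_e F G adj₁]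
    constructor
    · rintro ⟨e, he⟩
      refine ⟨⟨fun X => adj₂.unit.app (F.obj X) ≫ F.map (e.app X), ?_⟩, ?_⟩
      · intro X Y f
        have h1 := adj₂.unit.naturality (F.map f)
        simp only [Functor.id_map, Functor.comp_map] at h1
        have h2 := e.naturality f
        simp only [Functor.id_map, Functor.comp_map] at h2
        rw [reassoc_of% h1, ← F.map_comp, h2, F.map_comp, Category.assoc]
      · intro X
        dsimp only
        have h2 := adj₂.counit.naturality (e.app X)
        simp only [Functor.id_map, Functor.comp_map, Functor.id_obj, Functor.comp_obj] at h2
        rw [G.map_comp, Category.assoc, reassoc_of% h2,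
          reassoc_of% (adj₂.left_triangle_components (F.obj X)), he X]
    · rintro ⟨β, hβ⟩
      exact ⟨Functor.whiskerRight β G ≫ adj₂.counit, fun X => by simpa using hβ X⟩
  have iff4 : NaturallyFull F ↔ ∃ α' : G ⟶ G, ∀ X : C,
      adj₂.counit.app X ≫ adj₁.unit.app X ≫ α'.app (F.obj X) = 𝟙 (G.obj (F.obj X)) := by
    rw [naturallyFull_iff_exists_m F G adj₂]
    constructor
    · rintro ⟨m, hm⟩
      refine ⟨⟨fun X => m.app (G.obj X) ≫ G.map (adj₁.counit.app X), ?_⟩, ?_⟩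
      · intro X Y f
        have h1 := adj₁.counit.naturality f
        simp only [Functor.id_map, Functor.comp_map] at h1
        have h2 := m.naturality (G.map f)
        simp only [Functor.id_map, Functor.comp_map] at h2
        rw [reassoc_of% h2, Category.assoc, ← G.map_comp, h1, G.map_comp]
      · intro X
        dsimp only
        have h2 := m.naturality (adj₁.unit.app X)
        simp only [Functor.id_map, Functor.comp_map, Functor.id_obj, Functor.comp_obj] at h2
        have h3 : G.map (F.map (adj₁.unit.app X)) ≫ G.map (adj₁.counit.app (F.obj X))
            = 𝟙 (G.obj (F.obj X)) := by
          rw [← G.map_comp]; simp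
        rw [reassoc_of% h2, h3, Category.comp_id, hm X]
    · rintro ⟨α', hα'⟩
      exact ⟨adj₁.unit ≫ Functor.whiskerLeft F α', fun X => by simpa using hα' X⟩
  have iff5 : NaturallyFull F ↔ ∃ β' : F ⟶ F, ∀ X : C,
      adj₂.counit.app X ≫ adj₁.unit.app X ≫ G.map (β'.app X) = 𝟙 (G.obj (F.obj X)) := by
    rw [naturallyFull_iff_exists_m F G adj₂]
    constructor
    · rintro ⟨m, hm⟩
      refine ⟨⟨fun X => F.map (m.app X) ≫ adj₁.counit.app (F.obj X), ?_⟩, ?_⟩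
      · intro X Y f
        have h1 := adj₁.counit.naturality (F.map f)
        simp only [Functor.id_map, Functor.comp_map] at h1
        have h2 := m.naturality f
        simp only [Functor.id_map, Functor.comp_map] at h2
        rw [← Category.assoc, ← F.map_comp, h2, F.map_comp, Category.assoc, h1, Category.assoc]
      · intro X
        dsimp only
        have h2 := adj₁.unit.naturality (m.app X)
        simp only [Functor.id_map, Functor.comp_map, Functor.id_obj, Functor.comp_obj] at h2
        rw [G.map_comp, ← reassoc_of% h2, adj₁.right_triangle_components,
          Category.comp_id, hm X]
    · rintro ⟨β', hβ'⟩
      exact ⟨adj₁.unit ≫ Functor.whiskerRight β' G, fun X => by simpa using hβ' X⟩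
  refine ⟨iff2, iff3, iff4, iff5, ?_⟩
  intro hNF X
  obtain ⟨α, hα⟩ := iff2.mp hNF
  obtain ⟨α', hα'⟩ := iff4.mp hNF
  have heq : α.app (F.obj X) = α'.app (F.obj X) := by
    calc α.app (F.obj X)
        = α.app (F.obj X) ≫ (adj₂.counit.app X ≫ adj₁.unit.app X ≫ α'.app (F.obj X)) := by
          rw [hα' X, Category.comp_id]
      _ = (α.app (F.obj X) ≫ adj₂.counit.app X ≫ adj₁.unit.app X) ≫ α'.app (F.obj X) := by
          simp [Category.assoc]
      _ = α'.app (F.obj X) := by rw [hα X, Category.id_comp]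
  refine ⟨α'.app (F.obj X), by simpa using hα' X, ?_⟩
  rw [← heq]
  simpa using hα X
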